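/- Any phrase of an arbitrary LZ77 parsing of a string s overlaps with at most two phrases of the greedy LZ77 parsing of s. -/

import Mathlib

/-- Starting (0-indexed) position of the `i`-th phrase of a parsing. -/
def startPos {α : Type*} (ps : List (List α)) (i : ℕ) : ℕ :=
  ((ps.take i).flatten).length

/-- An LZ77 parsing of `s`: phrases are nonempty, concatenate to `s`, and every
phrase is either a single letter, or its prefix missing the last letter occurs
in `s` starting strictly before the phrase's start. -/
def IsLZ77Parsing {α : Type*} (s : List α) (ps : List (List α)) : Prop :=
  ps.flatten = s ∧ (∀ p ∈ ps, p ≠ []) ∧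
  ∀ i : Fin ps.length, (ps.get i).length = 1 ∨
    (1 < (ps.get i).length ∧
      ∃ j < startPos ps i, (ps.get i).dropLast <+: s.drop j)

/-- A greedy LZ77 parsing: an LZ77 parsing in which every phrase is as long as
possible, i.e. no strictly longer phrase fitting in `s` would be admissible. -/
def IsGreedyLZ77Parsing {α : Type*} (s : List α) (ps : List (List α)) : Prop :=
  IsLZ77Parsing s ps ∧
  ∀ i : Fin ps.length, ∀ L : ℕ, (ps.get i).length < L →
    startPos ps i + L ≤ s.length →
    ¬ ∃ j < startPos ps i, (s.drop (startPos ps i)).take (L - 1) <+: s.drop j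

lemma startPos_mono {α : Type*} (ps : List (List α)) {m n : ℕ} (h : m ≤ n) :
    startPos ps m ≤ startPos ps n := by
  obtain ⟨t, ht⟩ : ps.take m <+: ps.take n := by
    have := List.take_prefix m (ps.take n)
    rwa [List.take_take, min_eq_left h] at this
  unfold startPos
  rw [← ht, List.flatten_append, List.length_append]
  omega

lemma startPos_succ {α : Type*} (ps : List (List α)) (j : Fin ps.length) :
    startPos ps ((j : ℕ) + 1) = startPos ps j + (ps.get j).length := by
  unfold startPos
  rw [List.take_succ, List.flatten_append, List.length_append]
  simp [List.getElem?_eq_getElem j.isLt]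

lemma startPos_length {α : Type*} (ps : List (List α)) :
    startPos ps ps.length = ps.flatten.length := by
  unfold startPos; rw [List.take_length]

lemma drop_startPos {α : Type*} (ps : List (List α)) (j : ℕ) :
    ps.flatten.drop (startPos ps j) = (ps.drop j).flatten := by
  have h : ps.flatten = (ps.take j).flatten ++ (ps.drop j).flatten := by
    rw [← List.flatten_append, List.take_append_drop]
  rw [h]; unfold startPos; rw [List.drop_left]

lemma get_prefix_drop {α : Type*} (ps : List (List α)) (j : Fin ps.length) :
    ps.get j <+: ps.flatten.drop (startPos ps j) := by
  rw [drop_startPos]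
  exact ⟨(ps.drop ((j : ℕ)+1)).flatten,
    by rw [← List.flatten_cons, List.get_eq_getElem, ← List.drop_eq_getElem_cons j.isLt]⟩

/-- Any phrase of an arbitrary LZ77 parsing overlaps with at most two phrases
of the greedy LZ77 parsing of the same string. -/
theorem phrase_overlaps_at_most_two {α : Type*} (s : List α)
    (ps qs : List (List α))
    (hps : IsGreedyLZ77Parsing s ps) (hqs : IsLZ77Parsing s qs) :
    ∀ i : Fin qs.length,
      (Finset.univ.filter (fun j : Fin ps.length =>
        startPos qs i < startPos ps j + (ps.get j).length ∧
        startPos ps j < startPos qs i + (qs.get i).length)).card ≤ 2 := by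
  intro i
  by_contra hcard
  rw [not_le] at hcard
  rw [Finset.two_lt_card_iff] at hcard
  obtain ⟨x, y, z, hx, hy, hz, hxy, hxz, hyz⟩ := hcard
  obtain ⟨hfq, hneq, hqcopy⟩ := hqs
  obtain ⟨⟨hfp, hnep, _⟩, hgreedy⟩ := hps
  -- key claim: no greedy-phrase index can lie strictly between two overlapping ones
  have key : ∀ j1 j2 j3 : Fin ps.length,
      startPos qs i < startPos ps j1 + (ps.get j1).length →
      startPos ps j3 < startPos qs i + (qs.get i).length →
      j1 < j2 → j2 < j3 → False := by
    intro j1 j2 j3 h1 h3 h12 h23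
    have hc_lb : startPos qs i < startPos ps j2 := by
      have hs := startPos_succ ps j1
      have hm := startPos_mono ps (show (j1 : ℕ) + 1 ≤ (j2 : ℕ) from h12)
      omega
    have hc_ub : startPos ps j2 + (ps.get j2).length + 1
        ≤ startPos qs i + (qs.get i).length := by
      have hs := startPos_succ ps j2
      have hm := startPos_mono ps (show (j2 : ℕ) + 1 ≤ (j3 : ℕ) from h23)
      omega
    have hb_le : startPos qs i + (qs.get i).length ≤ s.length := by
      have hs := startPos_succ qs i
      have hm := startPos_mono qs (show (i : ℕ) + 1 ≤ qs.length from i.isLt)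
      have hl := startPos_length qs
      rw [hfq] at hl
      omega
    have hp2 : 0 < (ps.get j2).length :=
      List.length_pos_iff.mpr (hnep _ (List.get_mem ps j2))
    have hqlen : 1 < (qs.get i).length := by omega
    rcases hqcopy i with h1len | ⟨_, j', hj', hpre⟩
    · omega
    · set a := startPos qs i with ha
      set c := startPos ps j2 with hc
      set ℓ := (ps.get j2).length with hℓ
      -- the copied prefix of the qs-phrase, as a take of s
      have hget : qs.get i <+: s.drop a := by
        have := get_prefix_drop qs i; rwa [hfq] at this
      have hdl : (qs.get i).dropLast <+: s.drop a :=
        (List.dropLast_prefix _).trans hget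
      have ht : (qs.get i).dropLast = (s.drop a).take ((qs.get i).length - 1) := by
        have h' := List.prefix_iff_eq_take.mp hdl
        rwa [List.length_dropLast] at h'
      rw [ht] at hpre
      obtain ⟨r, hr⟩ := hpre
      have htlen : ((s.drop a).take ((qs.get i).length - 1)).length
          = (qs.get i).length - 1 := by
        rw [List.length_take, List.length_drop]; omega
      have hsplit : s.drop (j' + (c - a))
          = ((s.drop a).take ((qs.get i).length - 1)).drop (c - a) ++ r := by
        have h1 : s.drop (j' + (c - a)) = (s.drop j').drop (c - a) := by
          rw [List.drop_drop]
        rw [h1, ← hr, List.drop_append_of_le_length (by omega)]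
      have hmid : ((s.drop a).take ((qs.get i).length - 1)).drop (c - a)
          = (s.drop c).take ((qs.get i).length - 1 - (c - a)) := by
        rw [List.drop_take, List.drop_drop]
        have : a + (c - a) = c := by omega
        rw [this]
      have hfin : (s.drop c).take ℓ <+: s.drop (j' + (c - a)) := by
        rw [hsplit, hmid]
        refine List.IsPrefix.trans ?_ (List.prefix_append _ _)
        have hle : ℓ ≤ (qs.get i).length - 1 - (c - a) := by omega
        have h2 : (s.drop c).take ℓ
            = ((s.drop c).take ((qs.get i).length - 1 - (c - a))).take ℓ := by
          rw [List.take_take, min_eq_left hle]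
        rw [h2]
        exact List.take_prefix _ _
      refine hgreedy j2 (ℓ + 1) (by omega) (by omega) ⟨j' + (c - a), by omega, ?_⟩
      simpa using hfin
  simp only [Finset.mem_filter, Finset.mem_univ, true_and] at hx hy hz
  rcases lt_trichotomy x y with h1 | h1 | h1
  · rcases lt_trichotomy y z with h2 | h2 | h2
    · exact key x y z hx.1 hz.2 h1 h2
    · exact hyz h2
    · rcases lt_trichotomy x z with h3 | h3 | h3
      · exact key x z y hx.1 hy.2 h3 h2
      · exact hxz h3
      · exact key z x y hz.1 hy.2 h3 h1
  · exact hxy h1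
  · rcases lt_trichotomy x z with h2 | h2 | h2
    · exact key y x z hy.1 hz.2 h1 h2
    · exact hxz h2
    · rcases lt_trichotomy y z with h3 | h3 | h3
      · exact key y z x hy.1 hx.2 h3 h2
      · exact hyz h3
      · exact key z y x hz.1 hx.2 h3 h1
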